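/- Let F̄(x) = c(x)·exp(−∫_0^x 1/a(y) dy) for x ≥ 0, where c : [0,∞) → (0,∞) is measurable with c(x) → c₀ > 0 as x → ∞, and a : [0,∞) → (0,∞) is measurable with 1/a locally integrable and a(x) → σ as x → ∞, where 0 < σ < ∞. Let p : ℕ → (0,∞) satisfy p(k) = F̄(k) for all k ∈ ℕ. Then p(n) / ∑_{i=n}^{∞} p(i) → 1 − e^{−1/σ} as n → ∞; in particular the hazard ratio of the discrete distribution converges to a positive finite constant. -/

import Mathlib

open MeasureTheory Filter

/-- Let `F̄(x) = c(x)·exp(-∫₀ˣ 1/a(y) dy)` with `c(x) → c₀ > 0` and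
auxiliary function `a(x) → σ ∈ (0,∞)`, and let `p(k) = F̄(k)` on `ℕ`. Then the discrete
hazard ratio converges: `p(n)/∑_{i=n}^∞ p(i) → 1 - e^(-1/σ)` as `n → ∞`. -/
theorem gumbel_discrete_hazard_ratio_tendsto
    (c a : ℝ → ℝ) (c₀ σ : ℝ) (hc₀ : 0 < c₀) (hσ : 0 < σ)
    (hcpos : ∀ x ≥ (0:ℝ), 0 < c x) (hcmeas : Measurable c)
    (hclim : Tendsto c atTop (nhds c₀))
    (hapos : ∀ x ≥ (0:ℝ), 0 < a x) (hameas : Measurable a)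
    (haint : ∀ x ≥ (0:ℝ), IntegrableOn (fun y => (a y)⁻¹) (Set.Icc 0 x))
    (halim : Tendsto a atTop (nhds σ))
    (F : ℝ → ℝ)
    (hF : ∀ x ≥ (0:ℝ), F x = c x * Real.exp (-∫ y in (0:ℝ)..x, (a y)⁻¹))
    (p : ℕ → ℝ) (hp : ∀ k : ℕ, p k = F k) :
    Tendsto (fun n : ℕ => p n / ∑' i : ℕ, p (n + i))
      atTop (nhds (1 - Real.exp (-1 / σ))) := by
  have hσ' : σ ≠ 0 := ne_of_gt hσ
  set q : ℝ := Real.exp (-1 / σ) with hqdef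
  have hq0 : 0 < q := Real.exp_pos _
  have hq1 : q < 1 := Real.exp_lt_one_iff.mpr (by rw [neg_div]; exact neg_neg_of_pos (by positivity))
  -- basic form of p
  have hpk : ∀ k : ℕ, p k = c k * Real.exp (-∫ y in (0:ℝ)..(k:ℝ), (a y)⁻¹) := by
    intro k; rw [hp, hF _ (Nat.cast_nonneg k)]
  have hppos : ∀ k : ℕ, 0 < p k := by
    intro k
    rw [hpk]
    exact mul_pos (hcpos _ (Nat.cast_nonneg k)) (Real.exp_pos _)
  -- interval integrability
  have hint : ∀ s t : ℝ, 0 ≤ s → s ≤ t →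
      IntervalIntegrable (fun y => (a y)⁻¹) volume s t := by
    intro s t hs hst
    rw [intervalIntegrable_iff_integrableOn_Icc_of_le hst]
    exact (haint t (hs.trans hst)).mono_set (Set.Icc_subset_Icc hs le_rfl)
  -- increment of the integral
  set J : ℕ → ℝ := fun k => ∫ y in (k:ℝ)..((k:ℝ)+1), (a y)⁻¹ with hJdef
  have hadd : ∀ k : ℕ, (∫ y in (0:ℝ)..((k:ℝ)+1), (a y)⁻¹)
      = (∫ y in (0:ℝ)..(k:ℝ), (a y)⁻¹) + J k := by
    intro k
    exact (intervalIntegral.integral_add_adjacent_intervals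
      (hint 0 k le_rfl (Nat.cast_nonneg k))
      (hint k (k+1) (Nat.cast_nonneg k) (by linarith))).symm
  -- the increment tends to 1/σ
  have hJ : Tendsto J atTop (nhds σ⁻¹) := by
    have hinv : Tendsto (fun y => (a y)⁻¹) atTop (nhds σ⁻¹) := halim.inv₀ hσ'
    rw [Metric.tendsto_atTop]
    intro ε hε
    obtain ⟨M, hM⟩ := Metric.tendsto_atTop.mp hinv (ε/2) (by linarith)
    refine ⟨⌈M⌉₊, fun n hn => ?_⟩
    have hMn : M ≤ (n : ℝ) := (Nat.le_ceil M).trans (Nat.cast_le.mpr hn)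
    have hii : IntervalIntegrable (fun y => (a y)⁻¹) volume (n:ℝ) ((n:ℝ)+1) :=
      hint n (n+1) (Nat.cast_nonneg n) (by linarith)
    have hconst : (∫ _ in (n:ℝ)..((n:ℝ)+1), σ⁻¹) = σ⁻¹ := by simp
    have key : J n - σ⁻¹ = ∫ y in (n:ℝ)..((n:ℝ)+1), ((a y)⁻¹ - σ⁻¹) := by
      rw [intervalIntegral.integral_sub hii intervalIntegrable_const, hconst]
    have hb : ∀ y ∈ Set.uIoc (n:ℝ) ((n:ℝ)+1), ‖(a y)⁻¹ - σ⁻¹‖ ≤ ε/2 := by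
      intro y hy
      rw [Set.uIoc_of_le (by linarith : (n:ℝ) ≤ (n:ℝ)+1)] at hy
      have := hM y (le_of_lt (lt_of_le_of_lt hMn hy.1))
      rw [Real.dist_eq] at this
      exact le_of_lt this
    have := intervalIntegral.norm_integral_le_of_norm_le_const hb
    rw [← key] at this
    simp only [add_sub_cancel_left, abs_one, mul_one] at this
    rw [Real.dist_eq]
    calc |J n - σ⁻¹| ≤ ε/2 := by simpa using this
      _ < ε := by linarith
  -- hazard ratio of p tends to q
  have hr : Tendsto (fun k : ℕ => p (k+1) / p k) atTop (nhds q) := by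
    have hratio : ∀ k : ℕ, p (k+1) / p k = (c ((k:ℝ)+1) / c (k:ℝ)) * Real.exp (-(J k)) := by
      intro k
      rw [hpk, hpk]
      have hc : (((k:ℕ)+1 : ℕ) : ℝ) = (k:ℝ)+1 := by push_cast; ring
      rw [hc, hadd k, neg_add, Real.exp_add]
      have h1 : c (k:ℝ) ≠ 0 := (hcpos _ (Nat.cast_nonneg k)).ne'
      have h2 : Real.exp (-∫ y in (0:ℝ)..(k:ℝ), (a y)⁻¹) ≠ 0 := (Real.exp_pos _).ne'
      field_simp
    rw [tendsto_congr hratio]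
    have hcast : Tendsto (fun k : ℕ => (k:ℝ)) atTop atTop := tendsto_natCast_atTop_atTop
    have h1 : Tendsto (fun k : ℕ => c ((k:ℝ)+1)) atTop (nhds c₀) :=
      hclim.comp ((tendsto_atTop_add_const_right _ 1 hcast))
    have h2 : Tendsto (fun k : ℕ => c (k:ℝ)) atTop (nhds c₀) := hclim.comp hcast
    have h3 : Tendsto (fun k : ℕ => Real.exp (-(J k))) atTop (nhds q) := by
      have : Tendsto (fun k : ℕ => -(J k)) atTop (nhds (-σ⁻¹)) := hJ.neg
      have := (Real.continuous_exp.tendsto _).comp this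
      simp only [Function.comp_def] at this
      simpa [hqdef, neg_div, one_div] using this
    have := (h1.div h2 (ne_of_gt hc₀)).mul h3
    simpa [div_self (ne_of_gt hc₀)] using this
  -- powers of the ratio
  have hpow : ∀ i : ℕ, Tendsto (fun n : ℕ => p (n+i) / p n) atTop (nhds (q^i)) := by
    intro i
    induction i with
    | zero =>
      have : ∀ n : ℕ, p (n+0) / p n = (1:ℝ) := fun n => by simp [div_self (hppos n).ne']
      rw [tendsto_congr this]
      simp only [pow_zero]
      exact tendsto_const_nhds
    | succ i ih =>
      have h1 : Tendsto (fun n : ℕ => p ((n+i)+1) / p (n+i)) atTop (nhds q) :=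
        hr.comp (tendsto_add_atTop_nat i)
      have h2 := h1.mul ih
      have heq : ∀ n : ℕ, (p ((n+i)+1) / p (n+i)) * (p (n+i) / p n) = p (n+(i+1)) / p n := by
        intro n
        have : n + (i+1) = (n+i)+1 := by ring
        rw [this]
        field_simp
        rw [mul_comm (p (n+i)) (p n), mul_div_mul_right _ _ (hppos (n+i)).ne']
      rw [tendsto_congr heq] at h2
      have : q * q^i = q^(i+1) := by ring
      rwa [this] at h2
  -- geometric domination
  set q' : ℝ := (1+q)/2 with hq'def
  have hq'0 : 0 ≤ q' := by positivity
  have hqq' : q < q' := by rw [hq'def]; linarith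
  have hq'1 : q' < 1 := by rw [hq'def]; linarith
  obtain ⟨N, hN⟩ : ∃ N : ℕ, ∀ k ≥ N, p (k+1) ≤ q' * p k := by
    obtain ⟨N, hN⟩ := (hr.eventually_lt_const hqq').exists_forall_of_atTop
    exact ⟨N, fun k hk => by
      have := hN k hk
      have hpk0 := hppos k
      calc p (k+1) = (p (k+1) / p k) * p k := by field_simp
        _ ≤ q' * p k := by nlinarith [le_of_lt this]⟩
  have hgeo : ∀ n ≥ N, ∀ i : ℕ, p (n+i) ≤ p n * q'^i := by
    intro n hn i
    induction i with
    | zero => simp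
    | succ i ih =>
      have : n + (i+1) = (n+i)+1 := by ring
      rw [this]
      calc p ((n+i)+1) ≤ q' * p (n+i) := hN _ (le_add_right hn)
        _ ≤ q' * (p n * q'^i) := by nlinarith [hppos (n+i)]
        _ = p n * q'^(i+1) := by ring
  have hsum : ∀ n ≥ N, Summable (fun i : ℕ => p (n+i)) := by
    intro n hn
    exact Summable.of_nonneg_of_le (fun i => (hppos _).le) (hgeo n hn)
      ((summable_geometric_of_lt_one hq'0 hq'1).mul_left (p n))
  -- Tannery
  have hT : Tendsto (fun n : ℕ => ∑' i : ℕ, p (n+i) / p n) atTop (nhds ((1-q)⁻¹)) := by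
    have := tendsto_tsum_of_dominated_convergence (𝓕 := atTop)
      (f := fun n i => p (n+i) / p n) (g := fun i => q^i) (bound := fun i => q'^i)
      (summable_geometric_of_lt_one hq'0 hq'1) hpow ?_
    · rwa [tsum_geometric_of_lt_one hq0.le hq1] at this
    · filter_upwards [eventually_ge_atTop N] with n hn i
      rw [Real.norm_eq_abs, abs_of_pos (div_pos (hppos _) (hppos _))]
      rw [div_le_iff₀ (hppos n)]
      calc p (n+i) ≤ p n * q'^i := hgeo n hn i
        _ = q'^i * p n := by ring
  have h1q : (0:ℝ) < 1 - q := by linarith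
  have hfin := hT.inv₀ (by positivity : ((1-q):ℝ)⁻¹ ≠ 0)
  rw [inv_inv] at hfin
  refine hfin.congr' ?_
  filter_upwards [eventually_ge_atTop N] with n hn
  rw [tsum_div_const, inv_div]
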